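/- For every ε > 0 there exist a law invariant sublinear risk measure ρ : L^∞ → ℝ satisfying the Lebesgue property and a constant c > 0 such that for all sufficiently large N, sup_{p ∈ [0,1]} E[ |ρ(Ber(p)) − ρ(Ber(p̂_N))| ] ≥ c · N^{−ε}, where for each p the random variables (X_n)_{n≤N} are i.i.d. Bernoulli(p) and p̂_N := (1/N) ∑_{n=1}^N X_n. -/

import Mathlib

open MeasureTheory ProbabilityTheory Filter Real
open scoped ENNReal NNReal
set_option linter.unusedSectionVars false

/-- The Bernoulli distribution `Ber(p) = (1-p)δ₀ + pδ₁` as a measure on `ℝ`. -/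
noncomputable def Ber (p : ℝ) : Measure ℝ :=
  (Real.toNNReal (1 - p)) • Measure.dirac (0 : ℝ) + (Real.toNNReal p) • Measure.dirac (1 : ℝ)

/-- The empirical success frequency `p̂_N`. -/
noncomputable def pAvg (N : ℕ) (x : Fin N → ℝ) : ℝ := (∑ i, x i) / N

namespace NoRates

/-- AVaR at level `u` of a law `ν`, via the Rockafellar–Uryasev representation. -/
noncomputable def avar (u : ℝ) (ν : Measure ℝ) : ℝ :=
  ⨅ a : ℝ, (a + (∫ x, max (x - a) 0 ∂ν) / u)

noncomputable def uk (k : ℕ) : ℝ := (2:ℝ)⁻¹ ^ k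

noncomputable def wk (α : ℝ) (k : ℕ) : ℝ := (1 - (2:ℝ) ^ (-α)) * ((2:ℝ) ^ (-α)) ^ k

/-- The risk measure on laws: a mixture of AVaR's. -/
noncomputable def rhoM (α : ℝ) (ν : Measure ℝ) : ℝ :=
  ∑' k : ℕ, wk α k * avar (uk k) ν

lemma uk_pos (k : ℕ) : 0 < uk k := by unfold uk; positivity

lemma uk_le_one (k : ℕ) : uk k ≤ 1 := by
  unfold uk; apply pow_le_one₀ <;> norm_num

lemma beta_pos (α : ℝ) : 0 < (2:ℝ) ^ (-α) := Real.rpow_pos_of_pos (by norm_num) _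

lemma beta_lt_one {α : ℝ} (hα : 0 < α) : (2:ℝ) ^ (-α) < 1 :=
  Real.rpow_lt_one_of_one_lt_of_neg (by norm_num) (by linarith)

lemma wk_nonneg {α : ℝ} (hα : 0 < α) (k : ℕ) : 0 ≤ wk α k := by
  have h1 := beta_lt_one hα
  have h2 := beta_pos α
  exact mul_nonneg (by linarith) (pow_nonneg h2.le k)

lemma wk_pos {α : ℝ} (hα : 0 < α) (k : ℕ) : 0 < wk α k := by
  have h1 := beta_lt_one hα
  have h2 := beta_pos α
  exact mul_pos (by linarith) (pow_pos h2 k)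

lemma summable_wk {α : ℝ} (hα : 0 < α) : Summable (wk α) :=
  (summable_geometric_of_lt_one (beta_pos α).le (beta_lt_one hα)).mul_left _

lemma tsum_wk {α : ℝ} (hα : 0 < α) : ∑' k, wk α k = 1 := by
  unfold wk
  rw [tsum_mul_left, tsum_geometric_of_lt_one (beta_pos α).le (beta_lt_one hα)]
  have : (1 : ℝ) - (2:ℝ) ^ (-α) ≠ 0 := by
    have := beta_lt_one hα; linarith
  field_simp

section P

variable {Ω' : Type*} [MeasurableSpace Ω'] {P' : Measure Ω'} [IsProbabilityMeasure P']

/-- The objective of the R-U representation, on random variables. -/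
noncomputable def avarP (P' : Measure Ω') (u : ℝ) (Y : Ω' → ℝ) : ℝ :=
  ⨅ a : ℝ, (a + (∫ ω, max (Y ω - a) 0 ∂P') / u)

lemma avar_map_eq {Y : Ω' → ℝ} (hY : Measurable Y) (u : ℝ) :
    avar u (Measure.map Y P') = avarP P' u Y := by
  unfold avar avarP
  refine congrArg _ (funext fun a => ?_)
  have hsm : AEStronglyMeasurable (fun x : ℝ => max (x - a) 0) (Measure.map Y P') :=
    Measurable.aestronglyMeasurable (by fun_prop)
  rw [integral_map hY.aemeasurable hsm]

lemma integrable_posPart {Y : Ω' → ℝ} (hY : Measurable Y) {C : ℝ}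
    (hC : ∀ᵐ ω ∂P', |Y ω| ≤ C) (a : ℝ) :
    Integrable (fun ω => max (Y ω - a) 0) P' := by
  refine (integrable_const (C + |a|)).mono'
    (((hY.sub measurable_const).max measurable_const).aestronglyMeasurable) ?_
  filter_upwards [hC] with ω hω
  rw [Real.norm_eq_abs, abs_of_nonneg (le_max_right _ _)]
  have h1 : Y ω ≤ C := (abs_le.mp hω).2
  have h2 : -|a| ≤ a := neg_abs_le a
  have h3 : Y ω - a ≤ C + |a| := by linarith
  have h4 : (0:ℝ) ≤ C + |a| := le_trans (abs_nonneg _) (by linarith [abs_nonneg (Y ω), hω, abs_nonneg a])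
  exact max_le h3 h4

lemma favg_lb {Y : Ω' → ℝ} (hY : Measurable Y) {C : ℝ}
    (hC : ∀ᵐ ω ∂P', |Y ω| ≤ C) {u : ℝ} (hu : 0 < u) (hu1 : u ≤ 1) (a : ℝ) :
    -C ≤ a + (∫ ω, max (Y ω - a) 0 ∂P') / u := by
  rcases le_or_gt (-C) a with h | h
  · have h0 : 0 ≤ (∫ ω, max (Y ω - a) 0 ∂P') / u := by
      apply div_nonneg _ hu.le
      exact integral_nonneg fun ω => le_max_right _ _
    linarith
  · have hint : -C - a ≤ ∫ ω, max (Y ω - a) 0 ∂P' := by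
      have : ∫ ω, (-C - a) ∂P' ≤ ∫ ω, max (Y ω - a) 0 ∂P' := by
        refine integral_mono_ae (integrable_const _) (integrable_posPart hY hC a) ?_
        filter_upwards [hC] with ω hω
        have h1 : -C ≤ Y ω := (abs_le.mp hω).1.trans' (by linarith)
        exact le_max_of_le_left (by linarith)
      simpa using this
    have hnum : -C - a ≤ (∫ ω, max (Y ω - a) 0 ∂P') / u := by
      rw [le_div_iff₀ hu]
      calc (-C - a) * u ≤ (-C - a) * 1 := by
            apply mul_le_mul_of_nonneg_left hu1 (by linarith)
        _ = -C - a := by ring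
        _ ≤ _ := hint
    linarith

lemma avarP_bddBelow {Y : Ω' → ℝ} (hY : Measurable Y) {C : ℝ}
    (hC : ∀ᵐ ω ∂P', |Y ω| ≤ C) {u : ℝ} (hu : 0 < u) (hu1 : u ≤ 1) :
    BddBelow (Set.range fun a : ℝ => a + (∫ ω, max (Y ω - a) 0 ∂P') / u) := by
  exact ⟨-C, by rintro x ⟨a, rfl⟩; exact favg_lb hY hC hu hu1 a⟩

lemma avarP_lb {Y : Ω' → ℝ} (hY : Measurable Y) {C : ℝ}
    (hC : ∀ᵐ ω ∂P', |Y ω| ≤ C) {u : ℝ} (hu : 0 < u) (hu1 : u ≤ 1) :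
    -C ≤ avarP P' u Y :=
  le_ciInf (favg_lb hY hC hu hu1)

lemma avarP_ub {Y : Ω' → ℝ} (hY : Measurable Y) {C : ℝ}
    (hC : ∀ᵐ ω ∂P', |Y ω| ≤ C) {u : ℝ} (hu : 0 < u) (hu1 : u ≤ 1) :
    avarP P' u Y ≤ C := by
  have h := ciInf_le (avarP_bddBelow hY hC hu hu1) C
  refine h.trans ?_
  have h0 : ∫ ω, max (Y ω - C) 0 ∂P' = 0 := by
    have he : (fun ω => max (Y ω - C) 0) =ᵐ[P'] fun _ => (0:ℝ) := by
      filter_upwards [hC] with ω hω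
      exact max_eq_right (sub_nonpos.mpr (abs_le.mp hω).2)
    rw [integral_congr_ae he, integral_zero]
  rw [h0]
  simp

lemma avarP_abs_le {Y : Ω' → ℝ} (hY : Measurable Y) {C : ℝ}
    (hC : ∀ᵐ ω ∂P', |Y ω| ≤ C) {u : ℝ} (hu : 0 < u) (hu1 : u ≤ 1) :
    |avarP P' u Y| ≤ C :=
  abs_le.mpr ⟨avarP_lb hY hC hu hu1, avarP_ub hY hC hu hu1⟩

lemma avarP_add_const {Y : Ω' → ℝ} (hY : Measurable Y) {C : ℝ}
    (hC : ∀ᵐ ω ∂P', |Y ω| ≤ C) {u : ℝ} (hu : 0 < u) (hu1 : u ≤ 1) (m : ℝ) :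
    avarP P' u (fun ω => Y ω + m) = avarP P' u Y + m := by
  have key : ∀ b : ℝ, (b + (∫ ω, max ((Y ω + m) - b) 0 ∂P') / u)
      = ((b - m) + (∫ ω, max (Y ω - (b - m)) 0 ∂P') / u) + m := by
    intro b
    have : (fun ω => max ((Y ω + m) - b) 0) = fun ω => max (Y ω - (b - m)) 0 := by
      funext ω; ring_nf
    rw [this]; ring
  apply le_antisymm
  · have h1 : avarP P' u (fun ω => Y ω + m) - m ≤ avarP P' u Y := by
      apply le_ciInf
      intro a
      have h2 : avarP P' u (fun ω => Y ω + m)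
          ≤ (a + m) + (∫ ω, max ((Y ω + m) - (a + m)) 0 ∂P') / u := by
        have hb : ∀ᵐ ω ∂P', |Y ω + m| ≤ C + |m| := by
          filter_upwards [hC] with ω hω
          calc |Y ω + m| ≤ |Y ω| + |m| := abs_add_le _ _
            _ ≤ C + |m| := by linarith
        exact ciInf_le (avarP_bddBelow (hY.add_const m) hb hu hu1) (a + m)
      rw [key (a + m)] at h2
      simpa using h2
    linarith
  · apply le_ciInf
    intro b
    rw [key b]
    have : avarP P' u Y ≤ (b - m) + (∫ ω, max (Y ω - (b - m)) 0 ∂P') / u :=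
      ciInf_le (avarP_bddBelow hY hC hu hu1) (b - m)
    linarith

lemma avarP_mono {Y Z : Ω' → ℝ} (hY : Measurable Y) (hZ : Measurable Z) {C D : ℝ}
    (hC : ∀ᵐ ω ∂P', |Y ω| ≤ C) (hD : ∀ᵐ ω ∂P', |Z ω| ≤ D)
    {u : ℝ} (hu : 0 < u) (hu1 : u ≤ 1) (hYZ : ∀ᵐ ω ∂P', Y ω ≤ Z ω) :
    avarP P' u Y ≤ avarP P' u Z := by
  apply ciInf_mono (avarP_bddBelow hY hC hu hu1)
  intro a
  have : ∫ ω, max (Y ω - a) 0 ∂P' ≤ ∫ ω, max (Z ω - a) 0 ∂P' := by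
    refine integral_mono_ae (integrable_posPart hY hC a) (integrable_posPart hZ hD a) ?_
    filter_upwards [hYZ] with ω hω
    exact max_le_max (by linarith) le_rfl
  have hdiv : (∫ ω, max (Y ω - a) 0 ∂P') / u ≤ (∫ ω, max (Z ω - a) 0 ∂P') / u := by
    gcongr
  linarith

lemma avarP_smul_le {Y : Ω' → ℝ} (hY : Measurable Y) {C : ℝ}
    (hC : ∀ᵐ ω ∂P', |Y ω| ≤ C) {u : ℝ} (hu : 0 < u) (hu1 : u ≤ 1)
    {t : ℝ} (ht : 0 < t) :
    avarP P' u (fun ω => t * Y ω) ≤ t * avarP P' u Y := by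
  refine le_of_forall_sub_le fun δ hδ => ?_
  rw [sub_le_iff_le_add]
  obtain ⟨a, ha⟩ : ∃ a : ℝ, a + (∫ ω, max (Y ω - a) 0 ∂P') / u < avarP P' u Y + δ / t :=
    exists_lt_of_ciInf_lt (lt_add_of_pos_right _ (by positivity))
  have hbt : ∀ᵐ ω ∂P', |t * Y ω| ≤ t * C := by
    filter_upwards [hC] with ω hω
    rw [abs_mul, abs_of_pos ht]
    exact mul_le_mul_of_nonneg_left hω ht.le
  have h1 : avarP P' u (fun ω => t * Y ω)
      ≤ t * a + (∫ ω, max (t * Y ω - t * a) 0 ∂P') / u :=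
    ciInf_le (avarP_bddBelow (hY.const_mul t) hbt hu hu1) (t * a)
  have h2 : ∫ ω, max (t * Y ω - t * a) 0 ∂P' = t * ∫ ω, max (Y ω - a) 0 ∂P' := by
    rw [← integral_const_mul]
    congr 1; funext ω
    rw [← mul_sub, mul_max_of_nonneg _ _ ht.le, mul_zero]
  calc avarP P' u (fun ω => t * Y ω) ≤ t * a + (t * ∫ ω, max (Y ω - a) 0 ∂P') / u := by
        rw [← h2]; exact h1
    _ = t * (a + (∫ ω, max (Y ω - a) 0 ∂P') / u) := by ring
    _ ≤ t * (avarP P' u Y + δ / t) := by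
        exact mul_le_mul_of_nonneg_left ha.le ht.le
    _ = t * avarP P' u Y + δ := by
        rw [mul_add, mul_div_cancel₀ _ ht.ne']

lemma avarP_smul {Y : Ω' → ℝ} (hY : Measurable Y) {C : ℝ}
    (hC : ∀ᵐ ω ∂P', |Y ω| ≤ C) {u : ℝ} (hu : 0 < u) (hu1 : u ≤ 1)
    {t : ℝ} (ht : 0 < t) :
    avarP P' u (fun ω => t * Y ω) = t * avarP P' u Y := by
  refine le_antisymm (avarP_smul_le hY hC hu hu1 ht) ?_
  have hbt : ∀ᵐ ω ∂P', |t * Y ω| ≤ t * C := by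
    filter_upwards [hC] with ω hω
    rw [abs_mul, abs_of_pos ht]
    exact mul_le_mul_of_nonneg_left hω ht.le
  have h := avarP_smul_le (P' := P') (hY.const_mul t) hbt hu hu1 (inv_pos.mpr ht)
  have heq : (fun ω => t⁻¹ * (t * Y ω)) = Y := by
    funext ω; rw [inv_mul_cancel_left₀ ht.ne']
  rw [heq] at h
  calc t * avarP P' u Y ≤ t * (t⁻¹ * avarP P' u (fun ω => t * Y ω)) :=
        mul_le_mul_of_nonneg_left h ht.le
    _ = avarP P' u (fun ω => t * Y ω) := by
        rw [← mul_assoc, mul_inv_cancel₀ ht.ne', one_mul]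

lemma avarP_convex {Y Z : Ω' → ℝ} (hY : Measurable Y) (hZ : Measurable Z) {C D : ℝ}
    (hC : ∀ᵐ ω ∂P', |Y ω| ≤ C) (hD : ∀ᵐ ω ∂P', |Z ω| ≤ D)
    {u : ℝ} (hu : 0 < u) (hu1 : u ≤ 1) {t : ℝ} (ht0 : 0 ≤ t) (ht1 : t ≤ 1) :
    avarP P' u (fun ω => t * Y ω + (1 - t) * Z ω)
      ≤ t * avarP P' u Y + (1 - t) * avarP P' u Z := by
  have hmixmeas : Measurable fun ω => t * Y ω + (1 - t) * Z ω :=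
    (hY.const_mul t).add (hZ.const_mul (1 - t))
  have hmixbd : ∀ᵐ ω ∂P', |t * Y ω + (1 - t) * Z ω| ≤ t * C + (1 - t) * D := by
    filter_upwards [hC, hD] with ω h1 h2
    calc |t * Y ω + (1 - t) * Z ω| ≤ |t * Y ω| + |(1 - t) * Z ω| := abs_add_le _ _
      _ = t * |Y ω| + (1 - t) * |Z ω| := by
          rw [abs_mul, abs_mul, abs_of_nonneg ht0, abs_of_nonneg (by linarith : (0:ℝ) ≤ 1 - t)]
      _ ≤ t * C + (1 - t) * D := by
          have := mul_le_mul_of_nonneg_left h1 ht0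
          have := mul_le_mul_of_nonneg_left h2 (by linarith : (0:ℝ) ≤ 1 - t)
          linarith
  refine le_of_forall_sub_le fun δ hδ => ?_
  rw [sub_le_iff_le_add]
  obtain ⟨a₁, ha₁⟩ : ∃ a : ℝ, a + (∫ ω, max (Y ω - a) 0 ∂P') / u < avarP P' u Y + δ :=
    exists_lt_of_ciInf_lt (lt_add_of_pos_right _ hδ)
  obtain ⟨a₂, ha₂⟩ : ∃ a : ℝ, a + (∫ ω, max (Z ω - a) 0 ∂P') / u < avarP P' u Z + δ :=
    exists_lt_of_ciInf_lt (lt_add_of_pos_right _ hδ)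
  have h1 : avarP P' u (fun ω => t * Y ω + (1 - t) * Z ω)
      ≤ (t * a₁ + (1 - t) * a₂)
        + (∫ ω, max ((t * Y ω + (1 - t) * Z ω) - (t * a₁ + (1 - t) * a₂)) 0 ∂P') / u :=
    ciInf_le (avarP_bddBelow hmixmeas hmixbd hu hu1) _
  have h2 : ∫ ω, max ((t * Y ω + (1 - t) * Z ω) - (t * a₁ + (1 - t) * a₂)) 0 ∂P'
      ≤ t * ∫ ω, max (Y ω - a₁) 0 ∂P' + (1 - t) * ∫ ω, max (Z ω - a₂) 0 ∂P' := by
    have hint : ∫ ω, (t * max (Y ω - a₁) 0 + (1 - t) * max (Z ω - a₂) 0) ∂P'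
        = t * ∫ ω, max (Y ω - a₁) 0 ∂P' + (1 - t) * ∫ ω, max (Z ω - a₂) 0 ∂P' := by
      rw [integral_add (((integrable_posPart hY hC a₁)).const_mul t)
        (((integrable_posPart hZ hD a₂)).const_mul (1 - t)),
        integral_const_mul, integral_const_mul]
    rw [← hint]
    refine integral_mono_ae (integrable_posPart hmixmeas hmixbd _)
      (((integrable_posPart hY hC a₁).const_mul t).add
        ((integrable_posPart hZ hD a₂).const_mul (1 - t))) ?_
    filter_upwards with ω
    have hA : (t * Y ω + (1 - t) * Z ω) - (t * a₁ + (1 - t) * a₂)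
        = t * (Y ω - a₁) + (1 - t) * (Z ω - a₂) := by ring
    rw [hA]
    refine max_le ?_ ?_
    · have h3 : t * (Y ω - a₁) ≤ t * max (Y ω - a₁) 0 :=
        mul_le_mul_of_nonneg_left (le_max_left _ _) ht0
      have h4 : (1 - t) * (Z ω - a₂) ≤ (1 - t) * max (Z ω - a₂) 0 :=
        mul_le_mul_of_nonneg_left (le_max_left _ _) (by linarith)
      linarith
    · have h3 : 0 ≤ t * max (Y ω - a₁) 0 :=
        mul_nonneg ht0 (le_max_right _ _)
      have h4 : 0 ≤ (1 - t) * max (Z ω - a₂) 0 :=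
        mul_nonneg (by linarith) (le_max_right _ _)
      linarith
  have h5 : avarP P' u (fun ω => t * Y ω + (1 - t) * Z ω)
      ≤ t * (a₁ + (∫ ω, max (Y ω - a₁) 0 ∂P') / u)
        + (1 - t) * (a₂ + (∫ ω, max (Z ω - a₂) 0 ∂P') / u) := by
    refine h1.trans ?_
    calc (t * a₁ + (1 - t) * a₂)
        + (∫ ω, max ((t * Y ω + (1 - t) * Z ω) - (t * a₁ + (1 - t) * a₂)) 0 ∂P') / u
        ≤ (t * a₁ + (1 - t) * a₂)
          + (t * ∫ ω, max (Y ω - a₁) 0 ∂P' + (1 - t) * ∫ ω, max (Z ω - a₂) 0 ∂P') / u := by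
          gcongr
      _ = t * (a₁ + (∫ ω, max (Y ω - a₁) 0 ∂P') / u)
          + (1 - t) * (a₂ + (∫ ω, max (Z ω - a₂) 0 ∂P') / u) := by ring
  calc avarP P' u (fun ω => t * Y ω + (1 - t) * Z ω)
      ≤ t * (avarP P' u Y + δ) + (1 - t) * (avarP P' u Z + δ) :=
        h5.trans (add_le_add (mul_le_mul_of_nonneg_left ha₁.le ht0)
          (mul_le_mul_of_nonneg_left ha₂.le (by linarith)))
    _ = t * avarP P' u Y + (1 - t) * avarP P' u Z + δ := by ring

lemma avarP_lipschitz {Y Z : Ω' → ℝ} (hY : Measurable Y) (hZ : Measurable Z) {C D : ℝ}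
    (hC : ∀ᵐ ω ∂P', |Y ω| ≤ C) (hD : ∀ᵐ ω ∂P', |Z ω| ≤ D)
    {u : ℝ} (hu : 0 < u) (hu1 : u ≤ 1) :
    avarP P' u Y ≤ avarP P' u Z + (∫ ω, |Y ω - Z ω| ∂P') / u := by
  have hint : Integrable (fun ω => |Y ω - Z ω|) P' := by
    refine (integrable_const (C + D)).mono' ((hY.sub hZ).abs.aestronglyMeasurable) ?_
    filter_upwards [hC, hD] with ω h1 h2
    rw [Real.norm_eq_abs, abs_abs]
    calc |Y ω - Z ω| ≤ |Y ω| + |Z ω| := abs_sub _ _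
      _ ≤ C + D := by linarith
  refine le_of_forall_sub_le fun δ hδ => ?_
  rw [sub_le_iff_le_add]
  obtain ⟨a, ha⟩ : ∃ a : ℝ, a + (∫ ω, max (Z ω - a) 0 ∂P') / u < avarP P' u Z + δ :=
    exists_lt_of_ciInf_lt (lt_add_of_pos_right _ hδ)
  have h1 : avarP P' u Y ≤ a + (∫ ω, max (Y ω - a) 0 ∂P') / u :=
    ciInf_le (avarP_bddBelow hY hC hu hu1) a
  have h2 : ∫ ω, max (Y ω - a) 0 ∂P'
      ≤ ∫ ω, max (Z ω - a) 0 ∂P' + ∫ ω, |Y ω - Z ω| ∂P' := by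
    rw [← integral_add (integrable_posPart hZ hD a) hint]
    refine integral_mono_ae (integrable_posPart hY hC a)
      ((integrable_posPart hZ hD a).add hint) ?_
    filter_upwards with ω
    refine max_le ?_ ?_
    · have : Y ω - a ≤ (Z ω - a) + |Y ω - Z ω| := by
        have := le_abs_self (Y ω - Z ω); linarith
      exact this.trans (add_le_add (le_max_left _ _) le_rfl)
    · exact add_nonneg (le_max_right _ _) (abs_nonneg _)
  have h3 : (∫ ω, max (Y ω - a) 0 ∂P') / u
      ≤ (∫ ω, max (Z ω - a) 0 ∂P') / u + (∫ ω, |Y ω - Z ω| ∂P') / u := by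
    rw [← add_div]; gcongr
  linarith

lemma iInf_id_max {u : ℝ} (hu : 0 < u) (hu1 : u ≤ 1) :
    ⨅ a : ℝ, (a + max (-a) 0 / u) = 0 := by
  have hnn : ∀ a : ℝ, 0 ≤ a + max (-a) 0 / u := by
    intro a
    rcases le_or_gt 0 a with h | h
    · have : 0 ≤ max (-a) 0 / u := div_nonneg (le_max_right _ _) hu.le
      linarith
    · rw [max_eq_left (by linarith : (0:ℝ) ≤ -a)]
      have : -a ≤ -a / u := by
        rw [le_div_iff₀ hu]
        calc -a * u ≤ -a * 1 := mul_le_mul_of_nonneg_left hu1 (by linarith)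
          _ = -a := by ring
      linarith
  refine le_antisymm ?_ (le_ciInf hnn)
  have hb : BddBelow (Set.range fun a : ℝ => a + max (-a) 0 / u) :=
    ⟨0, by rintro x ⟨a, rfl⟩; exact hnn a⟩
  have h := ciInf_le hb 0
  simpa using h

lemma avarP_zero {u : ℝ} (hu : 0 < u) (hu1 : u ≤ 1) :
    avarP P' u (fun _ : Ω' => (0:ℝ)) = 0 := by
  have h : avarP P' u (fun _ : Ω' => (0:ℝ)) = ⨅ a : ℝ, (a + max (-a) 0 / u) := by
    unfold avarP
    refine congrArg _ (funext fun a => ?_)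
    rw [integral_const]
    simp [zero_sub]
  rw [h]
  exact iInf_id_max hu hu1

/-- The risk measure on random variables. -/
noncomputable def rhoP (P' : Measure Ω') (α : ℝ) (Y : Ω' → ℝ) : ℝ :=
  ∑' k : ℕ, wk α k * avarP P' (uk k) Y

lemma rho_map {α : ℝ} {Y : Ω' → ℝ} (hY : Measurable Y) :
    rhoM α (Measure.map Y P') = rhoP P' α Y :=
  tsum_congr fun k => by rw [avar_map_eq hY]

lemma summable_rho {α : ℝ} (hα : 0 < α) {Y : Ω' → ℝ} (hY : Measurable Y) {C : ℝ}
    (hC : ∀ᵐ ω ∂P', |Y ω| ≤ C) :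
    Summable (fun k => wk α k * avarP P' (uk k) Y) := by
  refine Summable.of_norm_bounded ((summable_wk hα).mul_right C) ?_
  intro k
  rw [Real.norm_eq_abs, abs_mul, abs_of_nonneg (wk_nonneg hα k)]
  exact mul_le_mul_of_nonneg_left (avarP_abs_le hY hC (uk_pos k) (uk_le_one k))
    (wk_nonneg hα k)

lemma rhoP_add_const {α : ℝ} (hα : 0 < α) {Y : Ω' → ℝ} (hY : Measurable Y) {C : ℝ}
    (hC : ∀ᵐ ω ∂P', |Y ω| ≤ C) (m : ℝ) :
    rhoP P' α (fun ω => Y ω + m) = rhoP P' α Y + m := by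
  unfold rhoP
  have h : ∀ k : ℕ, wk α k * avarP P' (uk k) (fun ω => Y ω + m)
      = wk α k * avarP P' (uk k) Y + wk α k * m := by
    intro k
    rw [avarP_add_const hY hC (uk_pos k) (uk_le_one k) m]
    ring
  rw [tsum_congr h, Summable.tsum_add (summable_rho hα hY hC) ((summable_wk hα).mul_right m)]
  congr 1
  rw [tsum_mul_right, tsum_wk hα, one_mul]

lemma rhoP_zero {α : ℝ} (hα : 0 < α) : rhoP P' α (fun _ : Ω' => (0:ℝ)) = 0 := by
  unfold rhoP
  have h : ∀ k : ℕ, wk α k * avarP P' (uk k) (fun _ : Ω' => (0:ℝ)) = 0 := by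
    intro k
    rw [avarP_zero (uk_pos k) (uk_le_one k), mul_zero]
  rw [tsum_congr h, tsum_zero]

lemma rhoP_mono {α : ℝ} (hα : 0 < α) {Y Z : Ω' → ℝ} (hY : Measurable Y) (hZ : Measurable Z)
    {C D : ℝ} (hC : ∀ᵐ ω ∂P', |Y ω| ≤ C) (hD : ∀ᵐ ω ∂P', |Z ω| ≤ D)
    (hYZ : ∀ᵐ ω ∂P', Y ω ≤ Z ω) :
    rhoP P' α Y ≤ rhoP P' α Z := by
  refine Summable.tsum_le_tsum (fun k => ?_) (summable_rho hα hY hC) (summable_rho hα hZ hD)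
  exact mul_le_mul_of_nonneg_left
    (avarP_mono hY hZ hC hD (uk_pos k) (uk_le_one k) hYZ) (wk_nonneg hα k)

lemma rhoP_convex {α : ℝ} (hα : 0 < α) {Y Z : Ω' → ℝ} (hY : Measurable Y) (hZ : Measurable Z)
    {C D : ℝ} (hC : ∀ᵐ ω ∂P', |Y ω| ≤ C) (hD : ∀ᵐ ω ∂P', |Z ω| ≤ D)
    {t : ℝ} (ht0 : 0 ≤ t) (ht1 : t ≤ 1) :
    rhoP P' α (fun ω => t * Y ω + (1 - t) * Z ω)
      ≤ t * rhoP P' α Y + (1 - t) * rhoP P' α Z := by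
  have hmixmeas : Measurable fun ω => t * Y ω + (1 - t) * Z ω :=
    (hY.const_mul t).add (hZ.const_mul (1 - t))
  have hmixbd : ∀ᵐ ω ∂P', |t * Y ω + (1 - t) * Z ω| ≤ t * C + (1 - t) * D := by
    filter_upwards [hC, hD] with ω h1 h2
    calc |t * Y ω + (1 - t) * Z ω| ≤ |t * Y ω| + |(1 - t) * Z ω| := abs_add_le _ _
      _ = t * |Y ω| + (1 - t) * |Z ω| := by
          rw [abs_mul, abs_mul, abs_of_nonneg ht0, abs_of_nonneg (by linarith : (0:ℝ) ≤ 1 - t)]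
      _ ≤ t * C + (1 - t) * D := by
          have := mul_le_mul_of_nonneg_left h1 ht0
          have := mul_le_mul_of_nonneg_left h2 (by linarith : (0:ℝ) ≤ 1 - t)
          linarith
  have h1 : rhoP P' α (fun ω => t * Y ω + (1 - t) * Z ω)
      ≤ ∑' k, (t * (wk α k * avarP P' (uk k) Y) + (1 - t) * (wk α k * avarP P' (uk k) Z)) := by
    refine Summable.tsum_le_tsum (fun k => ?_) (summable_rho hα hmixmeas hmixbd)
      ((((summable_rho hα hY hC).mul_left t)).add
        (((summable_rho hα hZ hD)).mul_left (1 - t)))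
    have := avarP_convex hY hZ hC hD (uk_pos k) (uk_le_one k) ht0 ht1
    calc wk α k * avarP P' (uk k) (fun ω => t * Y ω + (1 - t) * Z ω)
        ≤ wk α k * (t * avarP P' (uk k) Y + (1 - t) * avarP P' (uk k) Z) :=
          mul_le_mul_of_nonneg_left this (wk_nonneg hα k)
      _ = t * (wk α k * avarP P' (uk k) Y) + (1 - t) * (wk α k * avarP P' (uk k) Z) := by
          ring
  rw [Summable.tsum_add ((summable_rho hα hY hC).mul_left t) ((summable_rho hα hZ hD).mul_left (1 - t)),
    tsum_mul_left, tsum_mul_left] at h1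
  exact h1

lemma rhoP_smul {α : ℝ} (hα : 0 < α) {Y : Ω' → ℝ} (hY : Measurable Y) {C : ℝ}
    (hC : ∀ᵐ ω ∂P', |Y ω| ≤ C) {t : ℝ} (ht : 0 < t) :
    rhoP P' α (fun ω => t * Y ω) = t * rhoP P' α Y := by
  unfold rhoP
  have h : ∀ k : ℕ, wk α k * avarP P' (uk k) (fun ω => t * Y ω)
      = t * (wk α k * avarP P' (uk k) Y) := by
    intro k
    rw [avarP_smul hY hC (uk_pos k) (uk_le_one k) ht]
    ring
  rw [tsum_congr h, tsum_mul_left]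

lemma rhoP_lebesgue {α : ℝ} (hα : 0 < α) {Y : Ω' → ℝ} {Yn : ℕ → Ω' → ℝ}
    (hY : Measurable Y) (hYn : ∀ n, Measurable (Yn n)) {C : ℝ}
    (hCn : ∀ n, ∀ᵐ ω ∂P', |Yn n ω| ≤ C)
    (hlim : ∀ᵐ ω ∂P', Tendsto (fun n => Yn n ω) atTop (nhds (Y ω))) :
    Tendsto (fun n => rhoP P' α (Yn n)) atTop (nhds (rhoP P' α Y)) := by
  -- |Y| ≤ C almost everywhere
  have hCae : ∀ᵐ ω ∂P', ∀ n, |Yn n ω| ≤ C := ae_all_iff.mpr hCn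
  have hC : ∀ᵐ ω ∂P', |Y ω| ≤ C := by
    filter_upwards [hlim, hCae] with ω hω hbd
    exact le_of_tendsto (hω.abs) (Eventually.of_forall hbd)
  -- L¹ convergence
  have hd : Tendsto (fun n => ∫ ω, |Yn n ω - Y ω| ∂P') atTop (nhds 0) := by
    have h0 : (0:ℝ) = ∫ _ : Ω', (0:ℝ) ∂P' := by rw [integral_zero]
    rw [h0]
    refine tendsto_integral_of_dominated_convergence (fun _ => 2 * C)
      (fun n => ((hYn n).sub hY).abs.aestronglyMeasurable)
      (integrable_const _) (fun n => ?_) ?_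
    · filter_upwards [hCn n, hC] with ω h1 h2
      rw [Real.norm_eq_abs, abs_abs]
      calc |Yn n ω - Y ω| ≤ |Yn n ω| + |Y ω| := abs_sub _ _
        _ ≤ 2 * C := by linarith
    · filter_upwards [hlim] with ω hω
      have : Tendsto (fun n => Yn n ω - Y ω) atTop (nhds 0) := by
        simpa using hω.sub (tendsto_const_nhds (x := Y ω))
      simpa using this.abs
  -- per-k convergence
  have hk : ∀ k : ℕ, Tendsto (fun n => wk α k * avarP P' (uk k) (Yn n)) atTop
      (nhds (wk α k * avarP P' (uk k) Y)) := by
    intro k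
    have hdiff : Tendsto (fun n => avarP P' (uk k) (Yn n) - avarP P' (uk k) Y) atTop
        (nhds 0) := by
      apply squeeze_zero_norm (a := fun n => (∫ ω, |Yn n ω - Y ω| ∂P') / uk k)
      · intro n
        rw [Real.norm_eq_abs, abs_sub_le_iff]
        constructor
        · have := avarP_lipschitz (hYn n) hY (hCn n) hC (uk_pos k) (uk_le_one k)
          linarith
        · have := avarP_lipschitz hY (hYn n) hC (hCn n) (uk_pos k) (uk_le_one k)
          have he : ∫ ω, |Y ω - Yn n ω| ∂P' = ∫ ω, |Yn n ω - Y ω| ∂P' := by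
            refine integral_congr_ae ?_
            filter_upwards with ω
            exact abs_sub_comm _ _
          rw [he] at this
          linarith
      · simpa using hd.div_const (uk k)
    have := (hdiff.add_const (avarP P' (uk k) Y)).const_mul (wk α k)
    simpa using this
  -- dominated convergence for the series
  have := tendsto_tsum_of_dominated_convergence
    (f := fun n k => wk α k * avarP P' (uk k) (Yn n))
    (g := fun k => wk α k * avarP P' (uk k) Y)
    (bound := fun k => wk α k * C)
    ((summable_wk hα).mul_right C) hk ?_
  · exact this
  · refine Eventually.of_forall fun n => fun k => ?_
    rw [Real.norm_eq_abs, abs_mul, abs_of_nonneg (wk_nonneg hα k)]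
    exact mul_le_mul_of_nonneg_left
      (avarP_abs_le (hYn n) (hCn n) (uk_pos k) (uk_le_one k)) (wk_nonneg hα k)

end P

section Ber

lemma integrable_dirac_my {f : ℝ → ℝ} (hf : Measurable f) (x : ℝ) :
    Integrable f (Measure.dirac x) := by
  refine ⟨hf.aestronglyMeasurable, ?_⟩
  simp [HasFiniteIntegral, lintegral_dirac]

lemma ber_int {q : ℝ} (hq0 : 0 ≤ q) (hq1 : q ≤ 1) (a : ℝ) :
    ∫ x, max (x - a) 0 ∂(Ber q)
      = (1 - q) * max (0 - a) 0 + q * max (1 - a) 0 := by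
  have hm : Measurable fun x : ℝ => max (x - a) 0 := by fun_prop
  unfold Ber
  rw [show ((1 - q).toNNReal • Measure.dirac (0:ℝ)) = (((1 - q).toNNReal : ℝ≥0∞) • Measure.dirac (0:ℝ)) from rfl,
    show (q.toNNReal • Measure.dirac (1:ℝ)) = ((q.toNNReal : ℝ≥0∞) • Measure.dirac (1:ℝ)) from rfl]
  rw [integral_add_measure
      ((integrable_dirac_my hm 0).smul_measure (c := ((1 - q).toNNReal : ℝ≥0∞))
        ENNReal.coe_ne_top)
      ((integrable_dirac_my hm 1).smul_measure (c := (q.toNNReal : ℝ≥0∞))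
        ENNReal.coe_ne_top),
    integral_smul_measure, integral_smul_measure,
    integral_dirac, integral_dirac]
  rw [show (((1 - q).toNNReal : ℝ≥0∞)).toReal = 1 - q by
      simp [Real.coe_toNNReal _ (by linarith : (0:ℝ) ≤ 1 - q)],
    show ((q.toNNReal : ℝ≥0∞)).toReal = q by simp [Real.coe_toNNReal _ hq0]]
  simp only [smul_eq_mul]

lemma avar_ber_eq {q : ℝ} (hq0 : 0 ≤ q) (hq1 : q ≤ 1) (u : ℝ) :
    avar u (Ber q)
      = ⨅ a : ℝ, (a + ((1 - q) * max (0 - a) 0 + q * max (1 - a) 0) / u) := by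
  unfold avar
  exact congrArg _ (funext fun a => by rw [ber_int hq0 hq1])

lemma fber_nonneg {q u : ℝ} (hq0 : 0 ≤ q) (hq1 : q ≤ 1) (hu : 0 < u) (hu1 : u ≤ 1) (a : ℝ) :
    0 ≤ a + ((1 - q) * max (0 - a) 0 + q * max (1 - a) 0) / u := by
  rcases le_or_gt 0 a with h | h
  · have h1 : 0 ≤ ((1 - q) * max (0 - a) 0 + q * max (1 - a) 0) / u :=
      div_nonneg (add_nonneg (mul_nonneg (by linarith) (le_max_right _ _))
        (mul_nonneg hq0 (le_max_right _ _))) hu.le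
    linarith
  · have e1 : max (0 - a) 0 = -a := by
      rw [zero_sub]; exact max_eq_left (by linarith)
    have e2 : max (1 - a) 0 = 1 - a := max_eq_left (by linarith)
    rw [e1, e2]
    have hnum : -a ≤ (1 - q) * (-a) + q * (1 - a) := by nlinarith
    have hdiv : -a ≤ ((1 - q) * (-a) + q * (1 - a)) / u := by
      rw [le_div_iff₀ hu]
      calc -a * u ≤ -a * 1 := mul_le_mul_of_nonneg_left hu1 (by linarith)
        _ = -a := by ring
        _ ≤ _ := hnum
    linarith

lemma avar_ber_nonneg {q u : ℝ} (hq0 : 0 ≤ q) (hq1 : q ≤ 1) (hu : 0 < u) (hu1 : u ≤ 1) :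
    0 ≤ avar u (Ber q) := by
  rw [avar_ber_eq hq0 hq1]
  exact le_ciInf (fber_nonneg hq0 hq1 hu hu1)

lemma avar_ber_le_one {q u : ℝ} (hq0 : 0 ≤ q) (hq1 : q ≤ 1) (hu : 0 < u) (hu1 : u ≤ 1) :
    avar u (Ber q) ≤ 1 := by
  rw [avar_ber_eq hq0 hq1]
  have hb : BddBelow (Set.range fun a : ℝ =>
      a + ((1 - q) * max (0 - a) 0 + q * max (1 - a) 0) / u) :=
    ⟨0, by rintro x ⟨a, rfl⟩; exact fber_nonneg hq0 hq1 hu hu1 a⟩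
  have h := ciInf_le hb 1
  refine h.trans ?_
  norm_num

lemma avar_ber_self {p : ℝ} (hp0 : 0 < p) (hp1 : p ≤ 1) :
    1 ≤ avar p (Ber p) := by
  rw [avar_ber_eq hp0.le hp1]
  refine le_ciInf fun a => ?_
  rcases lt_or_ge a 0 with h | h
  · have e1 : max (0 - a) 0 = -a := by
      rw [zero_sub]; exact max_eq_left (by linarith)
    have e2 : max (1 - a) 0 = 1 - a := max_eq_left (by linarith)
    rw [e1, e2]
    have hnum : -a + p ≤ (1 - p) * (-a) + p * (1 - a) := by nlinarith
    have hdiv : -a + p ≤ ((1 - p) * (-a) + p * (1 - a)) := by linarith [hnum]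
    have h2 : (-a + p) / p ≤ ((1 - p) * (-a) + p * (1 - a)) / p := by gcongr
    have h3 : -a + p ≤ (-a + p) / p := by
      rw [le_div_iff₀ hp0]
      nlinarith
    have h4 : (-a) + p ≥ -a * p + p := by nlinarith
    -- goal : 1 ≤ a + (...)/p
    have h5 : (-a + p) / p = (-a) / p + 1 := by field_simp
    have h6 : -a ≤ (-a) / p := by
      rw [le_div_iff₀ hp0]
      nlinarith
    have h7 : (-a) / p + 1 ≤ ((1 - p) * (-a) + p * (1 - a)) / p := by
      rw [← h5]; exact h2
    linarith
  · rcases lt_or_ge a 1 with h1 | h1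
    · have e1 : max (0 - a) 0 = 0 := by
        rw [zero_sub]; exact max_eq_right (by linarith)
      have e2 : max (1 - a) 0 = 1 - a := max_eq_left (by linarith)
      rw [e1, e2, mul_zero, zero_add, mul_div_cancel_left₀ _ hp0.ne']
      linarith
    · have e1 : max (0 - a) 0 = 0 := by
        rw [zero_sub]; exact max_eq_right (by linarith)
      have e2 : max (1 - a) 0 = 0 := max_eq_right (by linarith)
      rw [e1, e2, mul_zero, mul_zero, zero_add, zero_div]
      linarith

lemma summable_ber {α q : ℝ} (hα : 0 < α) (hq0 : 0 ≤ q) (hq1 : q ≤ 1) :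
    Summable (fun k => wk α k * avar (uk k) (Ber q)) := by
  refine Summable.of_norm_bounded ((summable_wk hα).mul_right 1) ?_
  intro k
  rw [Real.norm_eq_abs, abs_mul, abs_of_nonneg (wk_nonneg hα k)]
  refine mul_le_mul_of_nonneg_left ?_ (wk_nonneg hα k)
  rw [abs_of_nonneg (avar_ber_nonneg hq0 hq1 (uk_pos k) (uk_le_one k))]
  exact avar_ber_le_one hq0 hq1 (uk_pos k) (uk_le_one k)

lemma rhoM_ber_nonneg {α q : ℝ} (hα : 0 < α) (hq0 : 0 ≤ q) (hq1 : q ≤ 1) :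
    0 ≤ rhoM α (Ber q) :=
  tsum_nonneg fun k => mul_nonneg (wk_nonneg hα k)
    (avar_ber_nonneg hq0 hq1 (uk_pos k) (uk_le_one k))

lemma rhoM_ber_zero (α : ℝ) : rhoM α (Ber 0) = 0 := by
  unfold rhoM
  have h : ∀ k : ℕ, wk α k * avar (uk k) (Ber 0) = 0 := by
    intro k
    have hz : avar (uk k) (Ber 0) = 0 := by
      refine le_antisymm ?_ (avar_ber_nonneg le_rfl zero_le_one (uk_pos k) (uk_le_one k))
      rw [avar_ber_eq le_rfl zero_le_one]
      have hb : BddBelow (Set.range fun a : ℝ =>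
          a + ((1 - 0) * max (0 - a) 0 + 0 * max (1 - a) 0) / uk k) :=
        ⟨0, by rintro x ⟨a, rfl⟩; exact fber_nonneg le_rfl zero_le_one (uk_pos k) (uk_le_one k) a⟩
      have h := ciInf_le hb 0
      refine h.trans ?_
      norm_num
    rw [hz, mul_zero]
  rw [tsum_congr h, tsum_zero]

lemma rhoM_ber_ge_wk {α : ℝ} (hα : 0 < α) (m : ℕ) :
    wk α m ≤ rhoM α (Ber (uk m)) := by
  have hq0 : (0:ℝ) ≤ uk m := (uk_pos m).le
  have hq1 : uk m ≤ 1 := uk_le_one m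
  have h1 : wk α m ≤ wk α m * avar (uk m) (Ber (uk m)) := by
    calc wk α m = wk α m * 1 := by ring
      _ ≤ wk α m * avar (uk m) (Ber (uk m)) :=
        mul_le_mul_of_nonneg_left (avar_ber_self (uk_pos m) hq1) (wk_nonneg hα m)
  refine h1.trans ?_
  exact Summable.le_tsum (summable_ber hα hq0 hq1) m fun j _ =>
    mul_nonneg (wk_nonneg hα j) (avar_ber_nonneg hq0 hq1 (uk_pos j) (uk_le_one j))

lemma ber_singleton_zero {p : ℝ} (hp1 : p ≤ 1) :
    Ber p {0} = ENNReal.ofReal (1 - p) := by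
  unfold Ber
  rw [Measure.add_apply, Measure.smul_apply, Measure.smul_apply,
    Measure.dirac_apply' _ (measurableSet_singleton 0),
    Measure.dirac_apply' _ (measurableSet_singleton 0)]
  simp [ENNReal.smul_def, ENNReal.ofReal]

lemma ber_pair {p : ℝ} (hp0 : 0 ≤ p) (hp1 : p ≤ 1) :
    Ber p ({0, 1} : Set ℝ) = 1 := by
  unfold Ber
  have hms : MeasurableSet ({0, 1} : Set ℝ) :=
    (measurableSet_singleton 0).union (measurableSet_singleton 1)
  rw [Measure.add_apply, Measure.smul_apply, Measure.smul_apply,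
    Measure.dirac_apply' _ hms, Measure.dirac_apply' _ hms]
  have h0 : (0:ℝ) ∈ ({0, 1} : Set ℝ) := by norm_num
  have h1 : (1:ℝ) ∈ ({0, 1} : Set ℝ) := by norm_num
  rw [Set.indicator_of_mem h0, Set.indicator_of_mem h1]
  simp only [Pi.one_apply, ENNReal.smul_def, smul_eq_mul, mul_one]
  rw [← ENNReal.coe_add, ← Real.toNNReal_add (by linarith) hp0]
  norm_num

theorem ber_prob {p : ℝ} (hp0 : 0 ≤ p) (hp1 : p ≤ 1) : IsProbabilityMeasure (Ber p) := by
  constructor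
  unfold Ber
  rw [Measure.add_apply, Measure.smul_apply, Measure.smul_apply,
    Measure.dirac_apply' _ MeasurableSet.univ, Measure.dirac_apply' _ MeasurableSet.univ]
  rw [Set.indicator_of_mem (Set.mem_univ _), Set.indicator_of_mem (Set.mem_univ _)]
  simp only [Pi.one_apply, ENNReal.smul_def, smul_eq_mul, mul_one]
  rw [← ENNReal.coe_add, ← Real.toNNReal_add (by linarith) hp0]
  norm_num

end Ber

section Estimate

lemma pi_ae_pair {p : ℝ} (hp0 : 0 ≤ p) (hp1 : p ≤ 1) (N : ℕ) :
    ∀ᵐ x ∂(Measure.pi fun _ : Fin N => Ber p), ∀ i, x i ∈ ({0, 1} : Set ℝ) := by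
  haveI : IsProbabilityMeasure (Ber p) := ber_prob hp0 hp1
  set Pn := Measure.pi fun _ : Fin N => Ber p with hPn
  haveI : IsProbabilityMeasure Pn := by infer_instance
  set S : Set (Fin N → ℝ) := Set.pi Set.univ fun _ => ({0, 1} : Set ℝ) with hS
  have hms : MeasurableSet ({0, 1} : Set ℝ) :=
    (measurableSet_singleton 0).union (measurableSet_singleton 1)
  have hSm : MeasurableSet S := MeasurableSet.pi Set.countable_univ fun _ _ => hms
  have hS1 : Pn S = 1 := by
    rw [hS, hPn, Measure.pi_pi]
    simp [ber_pair hp0 hp1]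
  have hSc : Pn Sᶜ = 0 := by
    rw [measure_compl hSm (by simp [hS1])]
    rw [hS1]
    simp
  rw [ae_iff]
  convert hSc using 2
  ext x
  simp [hS, Set.mem_pi]

lemma integral_ge {α : ℝ} (hα : 0 < α) {p : ℝ} (hp0 : 0 ≤ p) (hp1 : p ≤ 1) (N : ℕ) :
    rhoM α (Ber p) * (1 - p) ^ N ≤
      ∫ x, |rhoM α (Ber p) - rhoM α (Ber (pAvg N x))|
        ∂(Measure.pi fun _ : Fin N => Ber p) := by
  haveI : IsProbabilityMeasure (Ber p) := ber_prob hp0 hp1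
  set Pn := Measure.pi fun _ : Fin N => Ber p with hPn
  set F : (Fin N → ℝ) → ℝ := fun x => |rhoM α (Ber p) - rhoM α (Ber (pAvg N x))| with hF
  have hSf : (Set.pi Set.univ fun _ : Fin N => ({0, 1} : Set ℝ)).Finite :=
    Set.Finite.pi fun _ => (Set.finite_singleton (1:ℝ)).insert 0
  set T : Finset (Fin N → ℝ) := hSf.toFinset with hT
  set H : (Fin N → ℝ) → ℝ := fun x => ∑ v ∈ T, Set.indicator {v} (fun _ => F v) x with hH
  have hae : F =ᵐ[Pn] H := by
    filter_upwards [pi_ae_pair hp0 hp1 N] with x hx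
    have hxT : x ∈ T := by
      rw [hT, Set.Finite.mem_toFinset, Set.mem_pi]
      exact fun i _ => hx i
    show F x = H x
    rw [hH]
    simp only [Set.indicator_apply, Set.mem_singleton_iff]
    rw [Finset.sum_ite_eq T x (fun v => F v), if_pos hxT]
  have hint : ∀ v ∈ T, Integrable (Set.indicator {v} (fun _ => F v)) Pn := fun v _ =>
    (integrable_const (F v)).indicator (measurableSet_singleton v)
  have h1 : ∫ x, F x ∂Pn = ∫ x, H x ∂Pn := integral_congr_ae hae
  have h2 : ∫ x, H x ∂Pn = ∑ v ∈ T, (Pn {v}).toReal * F v := by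
    rw [hH, integral_finset_sum T hint]
    refine Finset.sum_congr rfl fun v _ => ?_
    rw [integral_indicator_const _ (measurableSet_singleton v), smul_eq_mul]
    rfl
  have hz : (fun _ : Fin N => (0:ℝ)) ∈ T := by
    rw [hT, Set.Finite.mem_toFinset, Set.mem_pi]
    intro i _
    left; rfl
  have h3 : (Pn {fun _ => (0:ℝ)}).toReal * F (fun _ => 0)
      ≤ ∑ v ∈ T, (Pn {v}).toReal * F v :=
    Finset.single_le_sum (f := fun v => (Pn {v}).toReal * F v)
      (fun v _ => mul_nonneg ENNReal.toReal_nonneg (abs_nonneg _)) hz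
  have hF0 : F (fun _ => 0) = rhoM α (Ber p) := by
    have hp' : pAvg N (fun _ : Fin N => (0:ℝ)) = 0 := by simp [pAvg]
    rw [hF]
    show |rhoM α (Ber p) - rhoM α (Ber (pAvg N fun _ => 0))| = rhoM α (Ber p)
    rw [hp', rhoM_ber_zero, sub_zero, abs_of_nonneg (rhoM_ber_nonneg hα hp0 hp1)]
  have hsing : ({fun _ => (0:ℝ)} : Set (Fin N → ℝ)) = Set.pi Set.univ fun _ => ({0} : Set ℝ) := by
    ext x
    simp [Set.mem_pi, funext_iff]
  have h5 : (Pn {fun _ => (0:ℝ)}).toReal = (1 - p) ^ N := by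
    rw [hsing, hPn, Measure.pi_pi]
    simp only [ber_singleton_zero hp1, Finset.prod_const, Finset.card_univ, Fintype.card_fin]
    rw [ENNReal.toReal_pow, ENNReal.toReal_ofReal (by linarith)]
  calc rhoM α (Ber p) * (1 - p) ^ N
      = (Pn {fun _ => (0:ℝ)}).toReal * F (fun _ => 0) := by rw [hF0, h5]; ring
    _ ≤ ∑ v ∈ T, (Pn {v}).toReal * F v := h3
    _ = ∫ x, H x ∂Pn := h2.symm
    _ = ∫ x, F x ∂Pn := h1.symm

lemma final_estimate {ε : ℝ} (hε : 0 < ε) :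
    ∃ c > 0, ∃ N₀ : ℕ, ∀ N : ℕ, N₀ ≤ N → ∃ p ∈ Set.Icc (0:ℝ) 1,
      c * (N : ℝ) ^ (-ε) ≤
        ∫ x, |rhoM ε (Ber p) - rhoM ε (Ber (pAvg N x))|
          ∂(Measure.pi fun _ : Fin N => Ber p) := by
  have hβ0 := beta_pos ε
  have hβ1 := beta_lt_one hε
  have h4pos : (0:ℝ) < (4:ℝ) ^ (-ε) := Real.rpow_pos_of_pos (by norm_num) _
  refine ⟨(1 - (2:ℝ) ^ (-ε)) * (4:ℝ) ^ (-ε) / 2,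
    div_pos (mul_pos (by linarith) h4pos) two_pos, 2, fun N hN => ?_⟩
  have hN1 : 1 < N := hN
  set m : ℕ := Nat.clog 2 N + 1 with hm
  set p : ℝ := uk m with hp
  have hp0 : 0 < p := uk_pos m
  have hp1 : p ≤ 1 := uk_le_one m
  refine ⟨p, ⟨hp0.le, hp1⟩, ?_⟩
  -- p = (2 ^ m)⁻¹
  have hpval : p = ((2:ℝ) ^ m)⁻¹ := by
    rw [hp]; unfold uk; rw [inv_pow]
  -- 2 * N ≤ 2 ^ m ≤ 4 * N
  have hlow : 2 * N ≤ 2 ^ m := by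
    have h := Nat.le_pow_clog (by norm_num : 1 < 2) N
    rw [hm, pow_succ]
    omega
  have hup : 2 ^ m ≤ 4 * N := by
    have h0 := Nat.pow_pred_clog_lt_self (by norm_num : 1 < 2) hN1
    have h : 2 ^ (Nat.clog 2 N - 1) < N := by simpa [Nat.pred_eq_sub_one] using h0
    have hc : 0 < Nat.clog 2 N := Nat.clog_pos (by norm_num) hN
    have hkey : 2 ^ m = 2 ^ (Nat.clog 2 N - 1) * 4 := by
      rw [hm, show Nat.clog 2 N + 1 = (Nat.clog 2 N - 1) + 2 by omega, pow_add]
      norm_num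
    omega
  -- Bernoulli : (1 - p)^N ≥ 1/2
  have hNp : (N:ℝ) * p ≤ 1 / 2 := by
    rw [hpval, ← div_eq_mul_inv, div_le_div_iff₀ (by positivity) (by norm_num)]
    have : ((2:ℝ) * N) ≤ (2:ℝ) ^ m := by
      calc ((2:ℝ) * N) = ((2 * N : ℕ) : ℝ) := by push_cast; ring
        _ ≤ ((2 ^ m : ℕ) : ℝ) := by exact_mod_cast Nat.cast_le.mpr hlow
        _ = (2:ℝ) ^ m := by push_cast; ring
    linarith
  have hbern : 1 / 2 ≤ (1 - p) ^ N := by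
    have h := one_add_mul_le_pow (a := -p) (by linarith) N
    have : 1 + (N:ℝ) * (-p) = 1 - (N:ℝ) * p := by ring
    rw [this] at h
    have : (1:ℝ) + -p = 1 - p := by ring
    rw [this] at h
    linarith
  -- wk lower bound
  have hwk : (1 - (2:ℝ) ^ (-ε)) * ((4:ℝ) ^ (-ε) * (N:ℝ) ^ (-ε)) ≤ wk ε m := by
    unfold wk
    refine mul_le_mul_of_nonneg_left ?_ (by linarith)
    have e1 : ((2:ℝ) ^ (-ε)) ^ m = ((2:ℝ) ^ m) ^ (-ε) := by
      rw [← Real.rpow_natCast ((2:ℝ) ^ (-ε)) m, ← Real.rpow_natCast (2:ℝ) m,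
        ← Real.rpow_mul (by norm_num : (0:ℝ) ≤ 2),
        ← Real.rpow_mul (by norm_num : (0:ℝ) ≤ 2)]
      ring_nf
    rw [e1]
    have e2 : (4:ℝ) ^ (-ε) * (N:ℝ) ^ (-ε) = ((4:ℝ) * N) ^ (-ε) := by
      rw [← Real.mul_rpow (by norm_num) (Nat.cast_nonneg N)]
    rw [e2]
    refine Real.rpow_le_rpow_of_nonpos (by positivity) ?_ (by linarith)
    calc ((2:ℝ) ^ m) = ((2 ^ m : ℕ) : ℝ) := by push_cast; ring
      _ ≤ ((4 * N : ℕ) : ℝ) := by exact_mod_cast Nat.cast_le.mpr hup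
      _ = (4:ℝ) * N := by push_cast; ring
  -- combine
  have hmain : wk ε m * (1 / 2) ≤
      ∫ x, |rhoM ε (Ber p) - rhoM ε (Ber (pAvg N x))|
        ∂(Measure.pi fun _ : Fin N => Ber p) := by
    refine le_trans ?_ (integral_ge hε hp0.le hp1 N)
    have h1 : wk ε m ≤ rhoM ε (Ber p) := rhoM_ber_ge_wk hε m
    have h2 : (0:ℝ) ≤ wk ε m := wk_nonneg hε m
    nlinarith [hbern, rhoM_ber_nonneg hε hp0.le hp1]
  refine le_trans ?_ hmain
  have hNrpow : (0:ℝ) ≤ (N:ℝ) ^ (-ε) := Real.rpow_nonneg (Nat.cast_nonneg N) _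
  calc (1 - (2:ℝ) ^ (-ε)) * (4:ℝ) ^ (-ε) / 2 * (N:ℝ) ^ (-ε)
      = (1 - (2:ℝ) ^ (-ε)) * ((4:ℝ) ^ (-ε) * (N:ℝ) ^ (-ε)) * (1 / 2) := by ring
    _ ≤ wk ε m * (1 / 2) := by
        refine mul_le_mul_of_nonneg_right hwk (by norm_num)

end Estimate

end NoRates

/-- for every `ε > 0` there is a law invariant sublinear risk measure on
`L^∞(Ω',P')` with the Lebesgue property (given together with its factorization `ρm`
through laws) whose empirical estimation error on Bernoulli models is at least
`c · N^{-ε}` for all large `N`. -/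
theorem no_rates_in_general
    {Ω' : Type*} [MeasurableSpace Ω'] (P' : Measure Ω') [IsProbabilityMeasure P']
    -- (Ω', P') is atomless standard: every law on ℝ is realized:
    (hstd : ∀ ν : Measure ℝ, IsProbabilityMeasure ν →
      ∃ Y : Ω' → ℝ, Measurable Y ∧ Measure.map Y P' = ν)
    (ε : ℝ) (hε : 0 < ε) :
    ∃ ρ : (Ω' → ℝ) → ℝ, ∃ ρm : Measure ℝ → ℝ,
      -- cash additivity and normalization:
      (∀ Y : Ω' → ℝ, Measurable Y → (∃ C, ∀ x, |Y x| ≤ C) →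
        ∀ m : ℝ, ρ (fun x => Y x + m) = ρ Y + m) ∧
      ρ (fun _ => 0) = 0 ∧
      -- monotonicity:
      (∀ Y Z : Ω' → ℝ, Measurable Y → Measurable Z →
        (∃ C, ∀ x, |Y x| ≤ C) → (∃ C, ∀ x, |Z x| ≤ C) →
        (∀ᵐ x ∂P', Y x ≤ Z x) → ρ Y ≤ ρ Z) ∧
      -- convexity:
      (∀ Y Z : Ω' → ℝ, Measurable Y → Measurable Z →
        (∃ C, ∀ x, |Y x| ≤ C) → (∃ C, ∀ x, |Z x| ≤ C) →
        ∀ t : ℝ, t ∈ Set.Icc (0:ℝ) 1 →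
          ρ (fun x => t * Y x + (1 - t) * Z x) ≤ t * ρ Y + (1 - t) * ρ Z) ∧
      -- positive homogeneity (sublinearity):
      (∀ Y : Ω' → ℝ, Measurable Y → (∃ C, ∀ x, |Y x| ≤ C) →
        ∀ t : ℝ, 0 ≤ t → ρ (fun x => t * Y x) = t * ρ Y) ∧
      -- law invariance:
      (∀ Y Z : Ω' → ℝ, Measurable Y → Measurable Z →
        (∃ C, ∀ x, |Y x| ≤ C) → (∃ C, ∀ x, |Z x| ≤ C) →
        Measure.map Y P' = Measure.map Z P' → ρ Y = ρ Z) ∧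
      -- the Lebesgue property:
      (∀ (Y : Ω' → ℝ) (Yn : ℕ → Ω' → ℝ), Measurable Y → (∀ n, Measurable (Yn n)) →
        (∃ C, ∀ n x, |Yn n x| ≤ C) →
        (∀ᵐ x ∂P', Tendsto (fun n => Yn n x) atTop (nhds (Y x))) →
        Tendsto (fun n => ρ (Yn n)) atTop (nhds (ρ Y))) ∧
      -- ρm is the factorization of ρ through laws:
      (∀ Y : Ω' → ℝ, Measurable Y → (∃ C, ∀ x, |Y x| ≤ C) →
        ρm (Measure.map Y P') = ρ Y) ∧
      -- the estimation error converges at a rate no better than N^{-ε}: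
      (∃ c > 0, ∃ N₀ : ℕ, ∀ N : ℕ, N₀ ≤ N → ∃ p ∈ Set.Icc (0:ℝ) 1,
        c * (N : ℝ) ^ (-ε) ≤
          ∫ x, |ρm (Ber p) - ρm (Ber (pAvg N x))| ∂(Measure.pi fun _ : Fin N => Ber p)) := by
  classical
  refine ⟨fun Y => NoRates.rhoM ε (Measure.map Y P'), NoRates.rhoM ε,
    ?_, ?_, ?_, ?_, ?_, ?_, ?_, ?_, ?_⟩
  · -- cash additivity
    rintro Y hY ⟨C, hC⟩ m
    dsimp only
    rw [NoRates.rho_map (hY.add_const m), NoRates.rho_map hY,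
      NoRates.rhoP_add_const hε hY (ae_of_all _ hC) m]
  · -- normalization
    dsimp only
    rw [NoRates.rho_map measurable_const, NoRates.rhoP_zero hε]
  · -- monotonicity
    rintro Y Z hY hZ ⟨C, hC⟩ ⟨D, hD⟩ hle
    dsimp only
    rw [NoRates.rho_map hY, NoRates.rho_map hZ]
    exact NoRates.rhoP_mono hε hY hZ (ae_of_all _ hC) (ae_of_all _ hD) hle
  · -- convexity
    rintro Y Z hY hZ ⟨C, hC⟩ ⟨D, hD⟩ t ⟨ht0, ht1⟩
    dsimp only
    rw [NoRates.rho_map (Y := fun x => t * Y x + (1 - t) * Z x)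
        ((hY.const_mul t).add (hZ.const_mul (1 - t))),
      NoRates.rho_map hY, NoRates.rho_map hZ]
    exact NoRates.rhoP_convex hε hY hZ (ae_of_all _ hC) (ae_of_all _ hD) ht0 ht1
  · -- positive homogeneity
    rintro Y hY ⟨C, hC⟩ t ht
    dsimp only
    rcases ht.eq_or_lt with h0 | hpos
    · have he : (fun x => t * Y x) = fun _ : Ω' => (0:ℝ) := by
        funext x; rw [← h0, zero_mul]
      rw [he, NoRates.rho_map measurable_const, NoRates.rhoP_zero hε, ← h0, zero_mul]
    · rw [NoRates.rho_map (hY.const_mul t), NoRates.rho_map hY,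
        NoRates.rhoP_smul hε hY (ae_of_all _ hC) hpos]
  · -- law invariance
    rintro Y Z _ _ _ _ hmap
    exact congrArg _ hmap
  · -- Lebesgue property
    rintro Y Yn hY hYn ⟨C, hC⟩ hlim
    have key := NoRates.rhoP_lebesgue hε hY hYn
      (fun n => ae_of_all _ (fun x => hC n x)) hlim
    dsimp only
    rw [NoRates.rho_map hY]
    exact key.congr fun n => (NoRates.rho_map (hYn n)).symm
  · -- factorization
    rintro Y _ _
    rfl
  · -- the estimate
    exact NoRates.final_estimate hε
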